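/- If (a,b,h) ∈ I_r attains the minimum defining δ_r(m,n), i.e. δ_r(m,n) = a·n + b·m - h, then (a,b) attains the maximum of (m-a'-1)(n-b'-1) over all pairs (a',b') with 0 ≤ a' ≤ m-1, 0 ≤ b' ≤ n-1 and (a'+1)(b'+1)-1-r ≥ 0. -/
import Mathlib


/-- `δ_r(m,n)`: the minimum of `a*n + b*m - h` over the set
`I_r = {(a,b,h) : 0 ≤ a ≤ m-1, 0 ≤ b ≤ n-1, h ≥ 0, r = (a+1)(b+1)-1-h}`. -/
noncomputable def delta (m n r : ℤ) : ℤ :=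
  sInf {d : ℤ | ∃ a b h : ℤ, 0 ≤ a ∧ a ≤ m - 1 ∧ 0 ≤ b ∧ b ≤ n - 1 ∧ 0 ≤ h ∧
    r = (a + 1) * (b + 1) - 1 - h ∧ d = a * n + b * m - h}

/-- If `(a,b,h) ∈ I_r` attains the minimum defining `δ_r(m,n)`, then `(a,b)` attains the
maximum of `(m-a'-1)(n-b'-1)` over pairs `(a',b')` with `0 ≤ a' ≤ m-1`, `0 ≤ b' ≤ n-1` and
`(a'+1)(b'+1)-1-r ≥ 0`. -/
theorem minimizer_maximizes (m n r a b h : ℤ) (hm : 2 ≤ m) (hn : 2 ≤ n)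
    (hr0 : 0 < r) (hr1 : r < (m - 1) * (n - 1))
    (ha0 : 0 ≤ a) (ha1 : a ≤ m - 1) (hb0 : 0 ≤ b) (hb1 : b ≤ n - 1) (hh : 0 ≤ h)
    (hrel : r = (a + 1) * (b + 1) - 1 - h)
    (hmin : delta m n r = a * n + b * m - h) :
    (0 ≤ (a + 1) * (b + 1) - 1 - r) ∧
    ∀ a' b' : ℤ, 0 ≤ a' → a' ≤ m - 1 → 0 ≤ b' → b' ≤ n - 1 →
      0 ≤ (a' + 1) * (b' + 1) - 1 - r →
      (m - a' - 1) * (n - b' - 1) ≤ (m - a - 1) * (n - b - 1) := by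
  constructor
  · linarith
  intro a' b' ha'0 ha'1 hb'0 hb'1 hh'
  have hbdd : BddBelow {d : ℤ | ∃ a b h : ℤ, 0 ≤ a ∧ a ≤ m - 1 ∧ 0 ≤ b ∧ b ≤ n - 1 ∧ 0 ≤ h ∧
      r = (a + 1) * (b + 1) - 1 - h ∧ d = a * n + b * m - h} := by
    refine ⟨r, ?_⟩
    rintro d ⟨α, β, η, h1, h2, h3, h4, h5, h6, rfl⟩
    nlinarith [mul_nonneg h1 (by linarith : (0:ℤ) ≤ n - 1 - β),
      mul_nonneg h3 (by linarith : (0:ℤ) ≤ m - 1)]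
  have hmem : a' * n + b' * m - ((a' + 1) * (b' + 1) - 1 - r) ∈
      {d : ℤ | ∃ a b h : ℤ, 0 ≤ a ∧ a ≤ m - 1 ∧ 0 ≤ b ∧ b ≤ n - 1 ∧ 0 ≤ h ∧
      r = (a + 1) * (b + 1) - 1 - h ∧ d = a * n + b * m - h} :=
    ⟨a', b', (a' + 1) * (b' + 1) - 1 - r, ha'0, ha'1, hb'0, hb'1, hh', by ring, rfl⟩
  have := csInf_le hbdd hmem
  rw [delta] at hmin
  nlinarith [hmin ▸ this]
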